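/- Assume {W_ε} is L-admissible. Fix s ∈ {1,…,S} and let λ̂ ∈ ℂ be an eigenvalue of P̂_{k,β,L} possessing an eigenvector belonging to V_s. Then e^{2πikβ_s}·λ̂ is a nonpositive real number; in particular, if λ̂ ≠ 0 then λ̂ = −|λ̂|·e^{−2πikβ_s}, i.e. the complex argument of λ̂ equals −2πkβ_s + π modulo 2π. -/

import Mathlib

noncomputable section
open Complex Filter Topology MeasureTheory

/-- `eC k b = exp(-2πi k b)`. -/
def eC (k : ℤ) (b : ℝ) : ℂ := Complex.exp (-2 * (Real.pi : ℂ) * Complex.I * (k : ℂ) * (b : ℂ))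

variable {N S : ℕ}

/-- Hermitian inner product `⟨v,w⟩ = ∑_j v j * conj (w j)` on `ℂ^N`. -/
def inn (v w : Fin N → ℂ) : ℂ := ∑ j, v j * (starRingEnd ℂ) (w j)

/-- Euclidean norm on `ℂ^N`. -/
def nrm (v : Fin N → ℂ) : ℝ := Real.sqrt (∑ j, Complex.normSq (v j))

/-- `W_ε = I + ε Ẇ` (complexified). -/
def Weps (Wd : Matrix (Fin N) (Fin N) ℝ) (ε : ℝ) : Matrix (Fin N) (Fin N) ℂ :=
  1 + (ε : ℂ) • (Wd.map Complex.ofReal)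

/-- The diagonal matrix `D_{k,α}` with entries `exp(-2πik α_j)`. -/
def DmatA (k : ℤ) (α : Fin N → ℝ) : Matrix (Fin N) (Fin N) ℂ :=
  Matrix.diagonal fun j => eC k (α j)

/-- Partial sums of the band-width vector: `Nsum L s = L 0 + ⋯ + L (s-1)`. -/
def Nsum (L : Fin S → ℕ) (s : ℕ) : ℕ := ∑ i : Fin S, if (i : ℕ) < s then L i else 0

/-- `j` belongs to the `s`-th band `B_s` (with `j` 0-indexed). -/
def inBand (L : Fin S → ℕ) (s : Fin S) (j : Fin N) : Prop :=
  Nsum L (s : ℕ) ≤ (j : ℕ) ∧ (j : ℕ) < Nsum L ((s : ℕ) + 1)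

/-- `D_{k,β,L}`: block-diagonal with `s`-th block `exp(-2πik β_s)·Id`, expressed
via the band-index function `bI` (where `bI j` is the band of `j`). -/
def Dmat (k : ℤ) (β : Fin S → ℝ) (bI : Fin N → Fin S) : Matrix (Fin N) (Fin N) ℂ :=
  Matrix.diagonal fun j => eC k (β (bI j))

/-- `P_{ε,β} = D_{k,β,L} W_ε`. -/
def Pmat (k : ℤ) (β : Fin S → ℝ) (bI : Fin N → Fin S) (Wd : Matrix (Fin N) (Fin N) ℝ)
    (ε : ℝ) : Matrix (Fin N) (Fin N) ℂ := Dmat k β bI * Weps Wd ε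

/-- `Ŵ_L`: the block-diagonal part of `Ẇ` (blocks `Ŵ_1, …, Ŵ_S`). -/
def WhatL (Wd : Matrix (Fin N) (Fin N) ℝ) (bI : Fin N → Fin S) : Matrix (Fin N) (Fin N) ℝ :=
  Matrix.of fun j l => if bI j = bI l then Wd j l else 0

/-- `P̂_{k,β,L} = D_{k,β,L} Ŵ_L`. -/
def Phat (k : ℤ) (β : Fin S → ℝ) (bI : Fin N → Fin S) (Wd : Matrix (Fin N) (Fin N) ℝ) :
    Matrix (Fin N) (Fin N) ℂ := Dmat k β bI * (WhatL Wd bI).map Complex.ofReal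

/-- `L`-admissibility of the family `W_ε = I + εẆ`. -/
def LAdmissible (L : Fin S → ℕ) (Wd : Matrix (Fin N) (Fin N) ℝ) (bI : Fin N → Fin S) : Prop :=
  Wd.IsSymm ∧ (∀ i j, i ≠ j → 0 ≤ Wd i j) ∧ (∀ i, ∑ j, Wd i j = 0) ∧
  (∃ μ : Fin N → ℝ, Function.Injective μ ∧ ∃ v : Fin N → Fin N → ℝ,
    (∀ i, v i ≠ 0) ∧ ∀ i, Wd.mulVec (v i) = μ i • v i) ∧
  (∀ s : Fin S, ∃ μ : Fin (L s) → ℝ, Function.Injective μ ∧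
    ∃ v : Fin (L s) → Fin N → ℝ, (∀ i, v i ≠ 0) ∧ (∀ i j, bI j ≠ s → v i j = 0) ∧
      ∀ i, (WhatL Wd bI).mulVec (v i) = μ i • v i)

/-- `β ∈ Γ`: for every nonzero integer `k'`, the exponentials `exp(-2πik' β_s)`
of distinct bands never coincide. -/
def Gamma (β : Fin S → ℝ) : Prop :=
  ∀ k' : ℤ, k' ≠ 0 → ∀ s1 s2 : Fin S, s1 ≠ s2 → eC k' (β s1) ≠ eC k' (β s2)

/-- Orthogonal projection `π_s` of `ℂ^N` onto `V_s`. -/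
def projBand (bI : Fin N → Fin S) (s : Fin S) (v : Fin N → ℂ) : Fin N → ℂ :=
  fun j => if bI j = s then v j else 0

/-- `min_{θ∈[0,2π)} ‖v − e^{iθ} w‖`. -/
def phaseDist (v w : Fin N → ℂ) : ℝ :=
  sInf ((fun θ : ℝ => nrm (v - Complex.exp (θ * Complex.I) • w)) '' Set.Ico 0 (2 * Real.pi))

/-- `dist_{ℂP}(v,w) = min_{θ∈[0,2π)} ‖v/‖v‖ − e^{iθ}·w/‖w‖‖`. -/
def cpDist (v w : Fin N → ℂ) : ℝ :=
  sInf ((fun θ : ℝ =>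
    nrm ((nrm v)⁻¹ • v - Complex.exp (θ * Complex.I) • ((nrm w)⁻¹ • w))) '' Set.Ico 0 (2 * Real.pi))

lemma eC_mul_eC_neg (k : ℤ) (b : ℝ) : eC k b * eC (-k) b = 1 := by
  rw [eC, eC, ← Complex.exp_add, ← Complex.exp_zero]
  congr 1; push_cast; ring

lemma abs_eC (k : ℤ) (b : ℝ) : ‖eC k b‖ = 1 := by
  rw [eC, show -2 * (Real.pi : ℂ) * Complex.I * (k : ℂ) * (b : ℂ)
      = ((-2 * Real.pi * k * b : ℝ) : ℂ) * Complex.I by push_cast; ring,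
    Complex.norm_exp_ofReal_mul_I]

lemma Nsum_mono (L : Fin S → ℕ) : Monotone (Nsum L) := by
  intro a b hab
  refine Finset.sum_le_sum fun i _ => ?_
  by_cases h : (i : ℕ) < a
  · simp only [h, if_true, lt_of_lt_of_le h hab, le_refl]
  · simp only [h, if_false]; positivity

lemma band_unique {L : Fin S → ℕ} {s t : Fin S} {j : Fin N}
    (hs : inBand L s j) (ht : inBand L t j) : s = t := by
  by_contra hne
  have hne' : (s:ℕ) ≠ (t:ℕ) := fun h => hne (Fin.ext h)
  rcases Nat.lt_or_ge (s:ℕ) (t:ℕ) with h | h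
  · have := Nsum_mono L (show (s:ℕ)+1 ≤ (t:ℕ) from h)
    have h1 := hs.2; have h2 := ht.1; omega
  · have h' : (t:ℕ) < (s:ℕ) := lt_of_le_of_ne h (Ne.symm hne')
    have := Nsum_mono L (show (t:ℕ)+1 ≤ (s:ℕ) from h')
    have h1 := ht.2; have h2 := hs.1; omega

/-- an eigenvalue `λ̂` of `P̂_{k,β,L}` with an eigenvector in `V_s`
satisfies: `exp(2πikβ_s)·λ̂` is a nonpositive real; if moreover `λ̂ ≠ 0` then
`λ̂ = −|λ̂|·exp(−2πikβ_s)`. -/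
theorem stmt9 (N S : ℕ) (hN : 1 ≤ N) (hS1 : 1 ≤ S) (hSN : S ≤ N) (k : ℤ)
    (β : Fin S → ℝ) (hβ : Function.Injective β)
    (L : Fin S → ℕ) (hL : ∀ s, 0 < L s) (hsum : ∑ s, L s = N)
    (bI : Fin N → Fin S) (hbI : ∀ j, inBand L (bI j) j)
    (Wd : Matrix (Fin N) (Fin N) ℝ) (hadm : LAdmissible L Wd bI)
    (s : Fin S) (lamh : ℂ) (v : Fin N → ℂ) (hv0 : v ≠ 0)
    (hvV : ∀ j, ¬ inBand L s j → v j = 0)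
    (heig : (Phat k β bI Wd).mulVec v = lamh • v) :
    (∃ r : ℝ, r ≤ 0 ∧ eC (-k) (β s) * lamh = (r : ℂ)) ∧
    (lamh ≠ 0 → lamh = -((‖lamh‖ : ℝ) : ℂ) * eC k (β s)) := by
  obtain ⟨hWsymm, hWoff, hWrow, -, -⟩ := hadm
  set W : Matrix (Fin N) (Fin N) ℝ := WhatL Wd bI with hWdef
  set μ : ℂ := eC (-k) (β s) * lamh with hμdef
  -- W entries
  have hWent : ∀ j l, W j l = if bI j = bI l then Wd j l else 0 := fun j l => rfl
  have hWs : ∀ a b, W a b = W b a := by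
    intro a b
    rw [hWent, hWent]
    have hsym : Wd b a = Wd a b := congrFun (congrFun hWsymm a) b
    by_cases h : bI a = bI b
    · rw [if_pos h, if_pos h.symm]; exact hsym.symm
    · rw [if_neg h, if_neg (fun h' => h h'.symm)]
  have hWoffn : ∀ j l, j ≠ l → 0 ≤ W j l := by
    intro j l h
    rw [hWent]; split
    · exact hWoff j l h
    · exact le_rfl
  -- support of v
  have hvs : ∀ l, v l ≠ 0 → bI l = s := by
    intro l h
    by_contra hne
    exact h (hvV l (fun hb => hne (band_unique (hbI l) hb)))
  -- key pointwise eigen-equation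
  have hkey : ∀ j, eC k (β (bI j)) * ((W.map Complex.ofReal).mulVec v) j = lamh * v j := by
    intro j
    have h1 := congrFun heig j
    rw [Phat, ← Matrix.mulVec_mulVec, Dmat, Matrix.mulVec_diagonal] at h1
    simpa using h1
  have hone : eC (-k) (β s) * eC k (β s) = 1 := by
    rw [mul_comm]; exact eC_mul_eC_neg k (β s)
  have hmu : (W.map Complex.ofReal).mulVec v = μ • v := by
    funext j
    by_cases hj : bI j = s
    · have h1 := hkey j; rw [hj] at h1
      calc ((W.map Complex.ofReal).mulVec v) j
          = eC (-k) (β s) * (eC k (β s) * ((W.map Complex.ofReal).mulVec v) j) := by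
            rw [← mul_assoc, hone, one_mul]
        _ = eC (-k) (β s) * (lamh * v j) := by rw [h1]
        _ = (μ • v) j := by simp only [Pi.smul_apply, smul_eq_mul, hμdef]; ring
    · have hWv : ((W.map Complex.ofReal).mulVec v) j = 0 := by
        simp only [Matrix.mulVec, dotProduct, Matrix.map_apply]
        apply Finset.sum_eq_zero
        intro l _
        by_cases hvl : v l = 0
        · rw [hvl, mul_zero]
        · have hbl : bI j ≠ bI l := by rw [hvs l hvl]; exact hj
          rw [hWent, if_neg hbl]; simp
      have hvj : v j = 0 := hvV j (fun hb => hj (band_unique (hbI j) hb))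
      rw [hWv, Pi.smul_apply, hvj, smul_zero]
  -- μ is real
  have hc : (0:ℝ) < ∑ j, Complex.normSq (v j) := by
    obtain ⟨j0, hj0⟩ := Function.ne_iff.mp hv0
    refine Finset.sum_pos' (fun j _ => Complex.normSq_nonneg _) ⟨j0, Finset.mem_univ _, ?_⟩
    exact Complex.normSq_pos.mpr hj0
  set Q : ℂ := ∑ j, (starRingEnd ℂ) (v j) * ((W.map Complex.ofReal).mulVec v) j with hQdef
  have hQ1 : Q = μ * ((∑ j, Complex.normSq (v j) : ℝ) : ℂ) := by
    rw [hQdef]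
    push_cast
    rw [Finset.mul_sum]
    refine Finset.sum_congr rfl fun j _ => ?_
    rw [hmu, Pi.smul_apply, smul_eq_mul]
    rw [show ((Complex.normSq (v j) : ℝ) : ℂ) = (starRingEnd ℂ) (v j) * v j by
      rw [← Complex.normSq_eq_conj_mul_self]]
    ring
  have hQ2 : Q = ∑ j, ∑ l, ((W j l : ℝ) : ℂ) * ((starRingEnd ℂ) (v j) * v l) := by
    rw [hQdef]
    refine Finset.sum_congr rfl fun j _ => ?_
    simp only [Matrix.mulVec, dotProduct, Matrix.map_apply, Finset.mul_sum]
    refine Finset.sum_congr rfl fun l _ => by ring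
  have hconjQ : (starRingEnd ℂ) Q = Q := by
    rw [hQ2, map_sum]
    rw [Finset.sum_comm]
    refine Finset.sum_congr rfl fun a _ => ?_
    rw [map_sum]
    refine Finset.sum_congr rfl fun b _ => ?_
    simp only [map_mul, Complex.conj_ofReal, Complex.conj_conj]
    rw [hWs b a]
    ring
  have hμreal : ((μ.re : ℝ) : ℂ) = μ := by
    apply Complex.conj_eq_iff_re.mp
    have h1 : (starRingEnd ℂ) Q = (starRingEnd ℂ) μ * ((∑ j, Complex.normSq (v j) : ℝ) : ℂ) := by
      rw [hQ1, map_mul, Complex.conj_ofReal]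
    rw [hconjQ, hQ1] at h1
    have hcne : ((∑ j, Complex.normSq (v j) : ℝ) : ℂ) ≠ 0 := by
      exact_mod_cast (Complex.ofReal_ne_zero.mpr (ne_of_gt hc))
    exact (mul_right_cancel₀ hcne h1).symm
  set r : ℝ := μ.re with hrdef
  -- Gershgorin: r ≤ 0
  obtain ⟨j0, -, hmax⟩ := Finset.exists_max_image Finset.univ (fun j => ‖v j‖)
    (Finset.univ_nonempty_iff.mpr (Fin.pos_iff_nonempty.mp hN))
  have hvj0 : 0 < ‖v j0‖ := by
    obtain ⟨l, hl⟩ := Function.ne_iff.mp hv0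
    exact lt_of_lt_of_le (norm_pos_iff.mpr hl) (hmax l (Finset.mem_univ l))
  have heq0 : ∑ l, ((W j0 l : ℝ) : ℂ) * v l = μ * v j0 := by
    have := congrFun hmu j0
    simpa only [Matrix.mulVec, dotProduct, Matrix.map_apply, Pi.smul_apply,
      smul_eq_mul] using this
  have hsplit : (μ - ((W j0 j0 : ℝ) : ℂ)) * v j0
      = ∑ l ∈ Finset.univ.erase j0, ((W j0 l : ℝ) : ℂ) * v l := by
    have h2 := Finset.sum_erase_add Finset.univ (fun l => ((W j0 l : ℝ) : ℂ) * v l)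
      (Finset.mem_univ j0)
    rw [heq0] at h2
    linear_combination -h2
  have habs : ‖μ - ((W j0 j0 : ℝ) : ℂ)‖ * ‖v j0‖
      ≤ (∑ l ∈ Finset.univ.erase j0, W j0 l) * ‖v j0‖ := by
    rw [← norm_mul, hsplit]
    calc ‖∑ l ∈ Finset.univ.erase j0, ((W j0 l : ℝ) : ℂ) * v l‖
        ≤ ∑ l ∈ Finset.univ.erase j0, ‖((W j0 l : ℝ) : ℂ) * v l‖ :=
          norm_sum_le _ _
      _ ≤ ∑ l ∈ Finset.univ.erase j0, W j0 l * ‖v j0‖ := by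
          refine Finset.sum_le_sum fun l hl => ?_
          have hnl : j0 ≠ l := (Finset.ne_of_mem_erase hl).symm
          have hWnn := hWoffn j0 l hnl
          rw [norm_mul, Complex.norm_real, Real.norm_eq_abs, _root_.abs_of_nonneg hWnn]
          exact mul_le_mul_of_nonneg_left (hmax l (Finset.mem_univ l)) hWnn
      _ = (∑ l ∈ Finset.univ.erase j0, W j0 l) * ‖v j0‖ := by
          rw [Finset.sum_mul]
  have hger : ‖μ - ((W j0 j0 : ℝ) : ℂ)‖ ≤ ∑ l ∈ Finset.univ.erase j0, W j0 l :=
    le_of_mul_le_mul_right habs hvj0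
  have habs2 : ‖μ - ((W j0 j0 : ℝ) : ℂ)‖ = |r - W j0 j0| := by
    rw [← hμreal, ← Complex.ofReal_sub, Complex.norm_real, Real.norm_eq_abs]
  have hrow : ∑ l, W j0 l ≤ 0 := by
    calc ∑ l, W j0 l ≤ ∑ l, Wd j0 l := by
          refine Finset.sum_le_sum fun l _ => ?_
          rw [hWent]
          split
          · exact le_rfl
          · rename_i h
            exact hWoff j0 l (fun he => h (he ▸ rfl))
      _ = 0 := hWrow j0
  have hsum_erase : (∑ l ∈ Finset.univ.erase j0, W j0 l) + W j0 j0 = ∑ l, W j0 l :=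
    Finset.sum_erase_add Finset.univ _ (Finset.mem_univ j0)
  have hr0 : r ≤ 0 := by
    have h3 : r - W j0 j0 ≤ |r - W j0 j0| := le_abs_self _
    rw [← habs2] at h3
    have h4 := le_trans h3 hger
    linarith
  constructor
  · exact ⟨r, hr0, hμreal.symm⟩
  · intro _
    have hl : lamh = eC k (β s) * (r : ℂ) := by
      have h5 : eC k (β s) * μ = lamh := by
        rw [hμdef, ← mul_assoc, eC_mul_eC_neg, one_mul]
      rw [← h5, ← hμreal]
    have habsl : (‖lamh‖ : ℝ) = -r := by
      rw [hl, norm_mul, abs_eC, one_mul, Complex.norm_real, Real.norm_eq_abs, abs_of_nonpos hr0]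
    rw [habsl, hl]
    push_cast
    ring
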